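/- Define δ'_⊘(z) = f_max ⊘ |z|⁻⁻ if 1+2^{1−p} < |z| ≤ f_max, and δ'_⊘(z) = f_max otherwise. Then δ'_⊘(z) is a correct upper bound for the second operand of division: for every nonzero float z (z ≠ ±0, −∞) and all floats x, y, if x ⊘ y = z then y ≤ δ'_⊘(z). Moreover, for 1+2^{1−p} < |z| ≤ f_max the inequality is strict for the supremum: the maximal y with ∃x, x ⊘ y = z is strictly less than δ'_⊘(z). -/

import Mathlib

open scoped Classical

/-- Finite binary floating-point numbers with precision `p` and exponent range
`[emin, emax]` (subnormals included), viewed as real numbers. -/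
def FF (p : ℕ) (emin emax : ℤ) : Set ℝ :=
  {x | ∃ m e : ℤ, |m| < 2 ^ p ∧ emin ≤ e ∧ e ≤ emax ∧
        x = (m : ℝ) * (2 : ℝ) ^ (e + 1 - (p : ℤ))}

/-- Binary floating-point numbers with precision `p` and unbounded exponent. -/
def FInf (p : ℕ) : Set ℝ :=
  {x | ∃ m e : ℤ, |m| < 2 ^ p ∧ x = (m : ℝ) * (2 : ℝ) ^ e}

/-- `z` has an even least-significant significand bit (canonical representation),
format with bounded exponents. -/
def evenFF (p : ℕ) (emin emax : ℤ) (z : ℝ) : Prop :=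
  ∃ m e : ℤ, |m| < 2 ^ p ∧ emin ≤ e ∧ e ≤ emax ∧
    z = (m : ℝ) * (2 : ℝ) ^ (e + 1 - (p : ℤ)) ∧ 2 ∣ m ∧
    ((2 : ℤ) ^ (p - 1) ≤ |m| ∨ e = emin)

/-- `z` has an odd least-significant significand bit (canonical representation). -/
def oddFF (p : ℕ) (emin emax : ℤ) (z : ℝ) : Prop :=
  ∃ m e : ℤ, |m| < 2 ^ p ∧ emin ≤ e ∧ e ≤ emax ∧
    z = (m : ℝ) * (2 : ℝ) ^ (e + 1 - (p : ℤ)) ∧ ¬ 2 ∣ m ∧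
    ((2 : ℤ) ^ (p - 1) ≤ |m| ∨ e = emin)

/-- Evenness of the significand for the unbounded-exponent format. -/
def evenInf (p : ℕ) (z : ℝ) : Prop :=
  ∃ m e : ℤ, z = (m : ℝ) * (2 : ℝ) ^ e ∧ 2 ∣ m ∧
    (((2 : ℤ) ^ (p - 1) ≤ |m| ∧ |m| < 2 ^ p) ∨ m = 0)

/-- `rnd` is round-to-nearest with ties-to-even onto the set `F` of representable
numbers, `even` being the evenness predicate used to break ties. -/
def IsRNE (F : Set ℝ) (even : ℝ → Prop) (rnd : ℝ → ℝ) : Prop :=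
  ∀ x : ℝ, rnd x ∈ F ∧ (∀ y ∈ F, |x - rnd x| ≤ |x - y|) ∧
    (∀ y ∈ F, y ≠ rnd x → |x - rnd x| = |x - y| → even (rnd x))

/-- The successor of `x` in the set `F`. -/
noncomputable def succF (F : Set ℝ) (x : ℝ) : ℝ := sInf {y | y ∈ F ∧ x < y}

/-- The predecessor of `x` in the set `F`. -/
noncomputable def predF (F : Set ℝ) (x : ℝ) : ℝ := sSup {y | y ∈ F ∧ y < x}

/-- The largest finite float, `f_max = (2 - 2^(1-p)) * 2^emax`. -/
noncomputable def fmax (p : ℕ) (emax : ℤ) : ℝ :=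
  (2 - (2 : ℝ) ^ (1 - (p : ℤ))) * (2 : ℝ) ^ emax

/-- The smallest positive (subnormal) float, `f_min = 2^(emin+1-p)`. -/
noncomputable def fminF (p : ℕ) (emin : ℤ) : ℝ := (2 : ℝ) ^ (emin + 1 - (p : ℤ))

/-- The bound `δ'_⊘` for the second operand of division. -/
noncomputable def deltaDiv (p : ℕ) (emin emax : ℤ) (rnd : ℝ → ℝ) (z : ℝ) : ℝ :=
  if 1 + (2 : ℝ) ^ (1 - (p : ℤ)) < |z| ∧ |z| ≤ fmax p emax then
    rnd (fmax p emax / predF (FF p emin emax) (predF (FF p emin emax) |z|))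
  else fmax p emax

section Aux

variable {p : ℕ} {emin emax : ℤ}

lemma two_zpow_pos (k : ℤ) : (0:ℝ) < 2 ^ k := by positivity

lemma two_zpow_mono {k l : ℤ} (h : k ≤ l) : (2:ℝ)^k ≤ 2^l :=
  zpow_le_zpow_right₀ one_le_two h

lemma two_zpow_add (a b : ℤ) : (2:ℝ)^(a+b) = 2^a * 2^b := zpow_add₀ two_ne_zero a b

lemma cast_two_pow (n : ℕ) : (((2:ℤ)^n : ℤ) : ℝ) = (2:ℝ)^((n:ℤ)) := by push_cast; simp

lemma mem_FF {m e : ℤ} (hm : |m| < 2 ^ p) (h1 : emin ≤ e) (h2 : e ≤ emax) :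
    (m : ℝ) * (2:ℝ) ^ (e + 1 - (p:ℤ)) ∈ FF p emin emax := ⟨m, e, hm, h1, h2, rfl⟩

lemma neg_mem_FF {f : ℝ} (hf : f ∈ FF p emin emax) : -f ∈ FF p emin emax := by
  obtain ⟨m, e, hm, h1, h2, rfl⟩ := hf
  exact ⟨-m, e, by simpa using hm, h1, h2, by push_cast; ring⟩

lemma one_mem_FF (hp : 1 ≤ p) (hemin : emin ≤ 0) (hemax : 1 ≤ emax) :
    (1:ℝ) ∈ FF p emin emax := by
  refine ⟨2 ^ (p-1), 0, ?_, by omega, by omega, ?_⟩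
  · rw [abs_of_nonneg (by positivity)]
    exact pow_lt_pow_right₀ (by norm_num) (by omega)
  · rw [cast_two_pow, ← two_zpow_add]
    rw [show ((p-1:ℕ):ℤ) + (0 + 1 - (p:ℤ)) = 0 by omega]
    simp

lemma onePlusEps_mem_FF (hp : 2 ≤ p) (hemin : emin ≤ 0) (hemax : 1 ≤ emax) :
    (1:ℝ) + (2:ℝ)^(1-(p:ℤ)) ∈ FF p emin emax := by
  refine ⟨2 ^ (p-1) + 1, 0, ?_, by omega, by omega, ?_⟩
  · rw [abs_of_nonneg (by positivity)]
    have h1 : (2:ℤ)^(p-1) + 2^(p-1) = 2^p := by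
      rw [← two_mul, ← pow_succ']
      congr 1; omega
    have h2 : (1:ℤ) < 2^(p-1) := by
      calc (1:ℤ) < 2 := one_lt_two
      _ ≤ 2^(p-1) := le_self_pow₀ one_le_two (by omega)
    linarith
  · rw [Int.cast_add, Int.cast_one, cast_two_pow, add_mul, one_mul, ← two_zpow_add,
      show ((p-1:ℕ):ℤ) + (0 + 1 - (p:ℤ)) = 0 by omega, zpow_zero]
    norm_num

lemma fmax_eq (hp : 1 ≤ p) :
    fmax p emax = ((2^p - 1 : ℤ):ℝ) * (2:ℝ)^(emax+1-(p:ℤ)) := by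
  have h1 : (2:ℝ)^(emax+1-(p:ℤ)) = 2^(1-(p:ℤ)) * 2^emax := by
    rw [← two_zpow_add]; ring_nf
  have h2 : (2:ℝ)^((p:ℤ)) * 2^(1-(p:ℤ)) = 2 := by
    rw [← two_zpow_add]; norm_num
  rw [fmax]
  push_cast
  rw [← zpow_natCast (2:ℝ) p, h1]
  linear_combination (-(2:ℝ)^emax) * h2

lemma fmax_pos (hp : 1 ≤ p) : (0:ℝ) < fmax p emax := by
  have h : (2:ℝ)^(1-(p:ℤ)) ≤ 1 := by
    simpa using two_zpow_mono (show 1-(p:ℤ) ≤ 0 by omega)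
  have := two_zpow_pos emax
  rw [fmax]; nlinarith

lemma le_fmax (hp : 1 ≤ p) {f : ℝ} (hf : f ∈ FF p emin emax) : f ≤ fmax p emax := by
  obtain ⟨m, e, hm, h1, h2, rfl⟩ := hf
  have hm2 : (m:ℝ) ≤ ((2^p - 1:ℤ):ℝ) := by
    exact_mod_cast Int.le_sub_one_of_lt (abs_lt.mp hm).2
  have hpos : (0:ℝ) ≤ ((2^p - 1:ℤ):ℝ) := by
    have h : (1:ℤ) ≤ 2^p := one_le_pow₀ one_le_two
    exact_mod_cast (by linarith : (0:ℤ) ≤ 2^p - 1)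
  rw [fmax_eq hp]
  calc (m:ℝ) * 2^(e+1-(p:ℤ)) ≤ ((2^p - 1:ℤ):ℝ) * 2^(e+1-(p:ℤ)) :=
        mul_le_mul_of_nonneg_right hm2 (two_zpow_pos _).le
    _ ≤ ((2^p - 1:ℤ):ℝ) * 2^(emax+1-(p:ℤ)) :=
        mul_le_mul_of_nonneg_left (two_zpow_mono (by omega)) hpos

lemma FF_finite : (FF p emin emax).Finite := by
  have hsub : FF p emin emax ⊆
      (fun q : ℤ × ℤ => (q.1:ℝ) * (2:ℝ)^(q.2+1-(p:ℤ))) ''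
        (Set.Icc (-(2^p)) (2^p) ×ˢ Set.Icc emin emax) := by
    rintro x ⟨m, e, hm, h1, h2, rfl⟩
    have := abs_lt.mp hm
    exact ⟨(m, e), ⟨⟨by linarith [this.1], by linarith [this.2]⟩, h1, h2⟩, rfl⟩
  exact Set.Finite.subset (Set.Finite.image _
    ((Set.finite_Icc _ _).prod (Set.finite_Icc _ _))) hsub


lemma FFnormalize_aux (hp : 1 ≤ p) (hemin : emin ≤ 0) :
    ∀ n : ℕ, ∀ m e : ℤ, (e - emin).toNat ≤ n → |m| < 2^p → emin ≤ e → e ≤ emax → 0 < m →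
    ∃ m' e' : ℤ, 0 < m' ∧ m' < 2^p ∧ emin ≤ e' ∧ e' ≤ emax ∧
      (m:ℝ) * (2:ℝ)^(e+1-(p:ℤ)) = (m':ℝ) * (2:ℝ)^(e'+1-(p:ℤ)) ∧
      ((2:ℤ)^(p-1) ≤ m' ∨ e' = emin) := by
  intro n
  induction n with
  | zero =>
    intro m e hn hm h1 h2 hm0
    have he : e = emin := by omega
    exact ⟨m, e, hm0, (abs_lt.mp hm).2, h1, h2, rfl, Or.inr he⟩
  | succ n ih =>
    intro m e hn hm h1 h2 hm0
    by_cases hc : (2:ℤ)^(p-1) ≤ m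
    · exact ⟨m, e, hm0, (abs_lt.mp hm).2, h1, h2, rfl, Or.inl hc⟩
    by_cases he : e = emin
    · exact ⟨m, e, hm0, (abs_lt.mp hm).2, h1, h2, rfl, Or.inr he⟩
    push_neg at hc
    have h1' : emin ≤ e - 1 := by omega
    have hmm : |2*m| < 2^p := by
      rw [abs_of_pos (by omega : (0:ℤ) < 2*m)]
      have hpow : (2:ℤ)^p = 2 * 2^(p-1) := by
        rw [← pow_succ']; congr 1; omega
      rw [abs_of_pos hm0] at hm
      linarith
    obtain ⟨m', e', a1, a2, a3, a4, a5, a6⟩ :=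
      ih (2*m) (e-1) (by omega) hmm h1' (by omega) (by omega)
    refine ⟨m', e', a1, a2, a3, a4, ?_, a6⟩
    rw [← a5]
    have : (2:ℝ)^(e+1-(p:ℤ)) = 2^(e-1+1-(p:ℤ)) * 2 := by
      rw [show (e+1-(p:ℤ)) = (e-1+1-(p:ℤ)) + 1 by ring, zpow_add_one₀ two_ne_zero]
    rw [this]; push_cast; ring

lemma FFnormalize (hp : 1 ≤ p) (hemin : emin ≤ 0) {v : ℝ}
    (hv : v ∈ FF p emin emax) (hv0 : 0 < v) :
    ∃ m e : ℤ, 0 < m ∧ m < 2^p ∧ emin ≤ e ∧ e ≤ emax ∧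
      v = (m:ℝ) * (2:ℝ)^(e+1-(p:ℤ)) ∧ ((2:ℤ)^(p-1) ≤ m ∨ e = emin) := by
  obtain ⟨m, e, hm, h1, h2, rfl⟩ := hv
  have hm0 : 0 < m := by
    by_contra h
    push_neg at h
    have : (m:ℝ) ≤ 0 := by exact_mod_cast h
    nlinarith [two_zpow_pos (e+1-(p:ℤ))]
  obtain ⟨m', e', a1, a2, a3, a4, a5, a6⟩ :=
    FFnormalize_aux hp hemin (e - emin).toNat m e le_rfl hm h1 h2 hm0
  exact ⟨m', e', a1, a2, a3, a4, a5, a6⟩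

-- key facts about a normalized positive float: 2^e ≤ v < 2^(e+1)
lemma norm_bounds (hp : 1 ≤ p) {m e : ℤ} (hm2 : m < 2^p) (hc : (2:ℤ)^(p-1) ≤ m) :
    (2:ℝ)^e ≤ (m:ℝ) * (2:ℝ)^(e+1-(p:ℤ)) ∧ (m:ℝ) * (2:ℝ)^(e+1-(p:ℤ)) < 2^(e+1) := by
  have hcr : (2:ℝ)^((p:ℤ)-1) ≤ (m:ℝ) := by
    have : (((2:ℤ)^(p-1) : ℤ):ℝ) ≤ (m:ℝ) := by exact_mod_cast hc
    rwa [cast_two_pow, show ((p-1:ℕ):ℤ) = (p:ℤ)-1 by omega] at this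
  have hmr : (m:ℝ) < (2:ℝ)^((p:ℤ)) := by
    have : (m:ℝ) < (((2:ℤ)^p : ℤ):ℝ) := by exact_mod_cast hm2
    rwa [cast_two_pow] at this
  constructor
  · calc (2:ℝ)^e = 2^((p:ℤ)-1) * 2^(e+1-(p:ℤ)) := by
          rw [← two_zpow_add]; ring_nf
    _ ≤ (m:ℝ) * 2^(e+1-(p:ℤ)) := mul_le_mul_of_nonneg_right hcr (two_zpow_pos _).le
  · calc (m:ℝ) * 2^(e+1-(p:ℤ)) < 2^((p:ℤ)) * 2^(e+1-(p:ℤ)) :=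
          mul_lt_mul_of_pos_right hmr (two_zpow_pos _)
    _ = 2^(e+1) := by rw [← two_zpow_add]; ring_nf

/-- Lemma A: any float strictly below a float `v ≥ 1` is at most `v(1-2^{-p})`. -/
lemma float_le_of_lt (hp : 1 ≤ p) (hemin : emin ≤ 0) {v f : ℝ}
    (hv : v ∈ FF p emin emax) (hv1 : 1 ≤ v)
    (hf : f ∈ FF p emin emax) (hfv : f < v) : f ≤ v * (1 - (2:ℝ)^(-(p:ℤ))) := by
  have hupos : (0:ℝ) < 2^(-(p:ℤ)) := two_zpow_pos _
  have huhalf : (2:ℝ)^(-(p:ℤ)) ≤ 1/2 := by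
    have := two_zpow_mono (show -(p:ℤ) ≤ -1 by omega)
    rw [show ((2:ℝ)^(-1:ℤ)) = 1/2 by norm_num] at this
    exact this
  obtain ⟨m, e, hm0, hmp, he1, he2, hveq, hcan⟩ := FFnormalize hp hemin hv (by linarith)
  have hmc : (2:ℤ)^(p-1) ≤ m := by
    rcases hcan with h | h
    · exact h
    · by_contra hlt
      push_neg at hlt
      have hcr : (m:ℝ) < (2:ℝ)^((p:ℤ)-1) := by
        have : (m:ℝ) < (((2:ℤ)^(p-1) : ℤ):ℝ) := by exact_mod_cast hlt
        rwa [cast_two_pow, show ((p-1:ℕ):ℤ) = (p:ℤ)-1 by omega] at this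
      have hv_lt : v < (2:ℝ)^emin := by
        rw [hveq, h]
        calc (m:ℝ) * 2^(emin+1-(p:ℤ)) < (2:ℝ)^((p:ℤ)-1) * 2^(emin+1-(p:ℤ)) :=
              mul_lt_mul_of_pos_right hcr (two_zpow_pos _)
        _ = 2^emin := by rw [← two_zpow_add]; ring_nf
      have : (2:ℝ)^emin ≤ 1 := by simpa using two_zpow_mono hemin
      linarith
  obtain ⟨h2e_le_v, hv_lt⟩ : (2:ℝ)^e ≤ v ∧ v < 2^(e+1) := by
    rw [hveq]; exact norm_bounds hp hmp hmc
  obtain ⟨m', e', hm', h1', h2', rfl⟩ := hf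
  by_cases hf0 : (m':ℝ) * 2^(e'+1-(p:ℤ)) ≤ 0
  · nlinarith
  push_neg at hf0
  by_cases hee : e ≤ e'
  · set d : ℕ := (e' - e).toNat with hd
    have hde : e' = e + d := by omega
    set k : ℤ := m' * 2^d with hk
    have hfk : (m':ℝ) * 2^(e'+1-(p:ℤ)) = (k:ℝ) * 2^(e+1-(p:ℤ)) := by
      rw [hk, hde]
      push_cast
      rw [show ((e:ℤ) + d + 1 - (p:ℤ)) = (d:ℤ) + (e + 1 - (p:ℤ)) by ring, two_zpow_add]
      rw [← zpow_natCast (2:ℝ) d]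
      ring
    have hkm : k < m := by
      have : (k:ℝ) < (m:ℝ) := by
        have h := hfv
        rw [hveq, hfk] at h
        exact lt_of_mul_lt_mul_right h (two_zpow_pos _).le
      exact_mod_cast this
    have hfle : (m':ℝ) * 2^(e'+1-(p:ℤ)) ≤ v - 2^(e+1-(p:ℤ)) := by
      rw [hfk, hveq]
      have : (k:ℝ) ≤ (m:ℝ) - 1 := by
        have : (k:ℝ) + 1 ≤ (m:ℝ) := by exact_mod_cast hkm
        linarith
      nlinarith [two_zpow_pos (e+1-(p:ℤ))]
    have hstep : v * (2:ℝ)^(-(p:ℤ)) < 2^(e+1-(p:ℤ)) := by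
      calc v * (2:ℝ)^(-(p:ℤ)) < (2:ℝ)^(e+1) * 2^(-(p:ℤ)) :=
            mul_lt_mul_of_pos_right hv_lt hupos
      _ = 2^(e+1-(p:ℤ)) := by rw [← two_zpow_add]; ring_nf
    nlinarith
  · push_neg at hee
    have hm'le : (m':ℝ) ≤ (2:ℝ)^((p:ℤ)) - 1 := by
      have h := Int.le_sub_one_of_lt (abs_lt.mp hm').2
      have : (m':ℝ) ≤ (((2:ℤ)^p - 1 : ℤ):ℝ) := by exact_mod_cast h
      rw [Int.cast_sub, Int.cast_one, cast_two_pow] at this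
      exact this
    have hb : (m':ℝ) * 2^(e'+1-(p:ℤ)) ≤ 2^(e'+1) * (1 - 2^(-(p:ℤ))) := by
      have h1 : (m':ℝ) * 2^(e'+1-(p:ℤ)) ≤ ((2:ℝ)^((p:ℤ)) - 1) * 2^(e'+1-(p:ℤ)) :=
        mul_le_mul_of_nonneg_right hm'le (two_zpow_pos _).le
      have h2 : ((2:ℝ)^((p:ℤ)) - 1) * 2^(e'+1-(p:ℤ)) = 2^(e'+1) * (1 - 2^(-(p:ℤ))) := by
        have e1 : (2:ℝ)^((p:ℤ)) * 2^(e'+1-(p:ℤ)) = 2^(e'+1) := by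
          rw [← two_zpow_add]; ring_nf
        have e2 : (2:ℝ)^(e'+1) * 2^(-(p:ℤ)) = 2^(e'+1-(p:ℤ)) := by
          rw [← two_zpow_add]; ring_nf
        nlinarith [e1, e2]
      linarith
    have h3 : (2:ℝ)^(e'+1) ≤ 2^e := two_zpow_mono (by omega)
    nlinarith [two_zpow_pos (e'+1)]

/-- Lemma B: existence of a successor with controlled gap. -/
lemma exists_succ (hp : 1 ≤ p) (hemin : emin ≤ 0) (hemax : 1 ≤ emax) {y : ℝ}
    (hy : y ∈ FF p emin emax) (hy0 : 0 < y) (hyf : y < fmax p emax) :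
    ∃ s ∈ FF p emin emax, y < s ∧
      s ≤ y + (2:ℝ)^(1-(p:ℤ)) * max y ((2:ℝ)^emin) := by
  obtain ⟨m, e, hm0, hmp, he1, he2, hyeq, hcan⟩ := FFnormalize hp hemin hy hy0
  have hgap : (2:ℝ)^(e+1-(p:ℤ)) ≤ (2:ℝ)^(1-(p:ℤ)) * max y ((2:ℝ)^emin) := by
    have hsplit : (2:ℝ)^(e+1-(p:ℤ)) = 2^(1-(p:ℤ)) * 2^e := by
      rw [← two_zpow_add]; ring_nf
    rw [hsplit]
    apply mul_le_mul_of_nonneg_left _ (two_zpow_pos _).le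
    rcases hcan with h | h
    · have := (norm_bounds hp hmp h (e := e)).1
      rw [← hyeq] at this
      exact le_trans this (le_max_left _ _)
    · rw [h]; exact le_max_right _ _
  by_cases hm : m ≤ 2^p - 2
  · refine ⟨((m+1:ℤ):ℝ) * 2^(e+1-(p:ℤ)), mem_FF ?_ he1 he2, ?_, ?_⟩
    · rw [abs_of_pos (by omega)]; omega
    · rw [hyeq]; push_cast
      nlinarith [two_zpow_pos (e+1-(p:ℤ))]
    · have hs2 : ((m:ℝ)+1) * 2^(e+1-(p:ℤ)) = y + 2^(e+1-(p:ℤ)) := by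
        rw [hyeq]; ring
      push_cast
      rw [hs2]
      linarith [hgap]
  · have hme : m = 2^p - 1 := by omega
    have he' : e < emax := by
      by_contra h
      push_neg at h
      have hee : e = emax := le_antisymm he2 h
      rw [hyeq, hme, hee, ← fmax_eq hp] at hyf
      exact lt_irrefl _ hyf
    refine ⟨(((2:ℤ)^(p-1):ℤ):ℝ) * 2^((e+1)+1-(p:ℤ)), mem_FF ?_ (by omega) (by omega), ?_, ?_⟩
    · rw [abs_of_pos (by positivity)]
      exact pow_lt_pow_right₀ (by norm_num) (by omega)
    · -- y = 2^(e+1) - 2^(e+1-p) < 2^(e+1) = s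
      have hs : (((2:ℤ)^(p-1):ℤ):ℝ) * 2^((e+1)+1-(p:ℤ)) = 2^(e+1) := by
        rw [cast_two_pow, ← two_zpow_add, show ((p-1:ℕ):ℤ) + ((e+1)+1-(p:ℤ)) = e+1 by omega]
      rw [hs, hyeq, hme]
      have : ((2^p - 1 : ℤ):ℝ) * 2^(e+1-(p:ℤ)) = 2^(e+1) - 2^(e+1-(p:ℤ)) := by
        rw [Int.cast_sub, Int.cast_one, cast_two_pow]
        have e1 : (2:ℝ)^((p:ℤ)) * 2^(e+1-(p:ℤ)) = 2^(e+1) := by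
          rw [← two_zpow_add]; ring_nf
        nlinarith [e1]
      rw [this]
      nlinarith [two_zpow_pos (e+1-(p:ℤ))]
    · have hs : (((2:ℤ)^(p-1):ℤ):ℝ) * 2^((e+1)+1-(p:ℤ)) = 2^(e+1) := by
        rw [cast_two_pow, ← two_zpow_add, show ((p-1:ℕ):ℤ) + ((e+1)+1-(p:ℤ)) = e+1 by omega]
      have heq : ((2^p - 1 : ℤ):ℝ) * 2^(e+1-(p:ℤ)) = 2^(e+1) - 2^(e+1-(p:ℤ)) := by
        rw [Int.cast_sub, Int.cast_one, cast_two_pow]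
        have e1 : (2:ℝ)^((p:ℤ)) * 2^(e+1-(p:ℤ)) = 2^(e+1) := by
          rw [← two_zpow_add]; ring_nf
        nlinarith [e1]
      have hy2 : y = 2^(e+1) - 2^(e+1-(p:ℤ)) := by rw [hyeq, hme, heq]
      rw [hs]
      linarith [hgap, hy2]

section Rnd

variable {F : Set ℝ} {even : ℝ → Prop} {rnd : ℝ → ℝ} (hrnd : IsRNE F even rnd)

lemma rnd_ge (hrnd : IsRNE F even rnd) {c t : ℝ} (hc : c ∈ F) (hct : c ≤ t) : c ≤ rnd t := by
  have h := (hrnd t).2.1 c hc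
  rw [abs_of_nonneg (by linarith : (0:ℝ) ≤ t - c)] at h
  have h2 := (abs_le.mp h).2
  linarith

lemma rnd_gt (hrnd : IsRNE F even rnd) {y t s : ℝ} (hs : s ∈ F) (h1 : |t - s| < t - y) :
    y < rnd t := by
  have h := (hrnd t).2.1 s hs
  by_contra hc
  push_neg at hc
  have h3 := le_abs_self (t - rnd t)
  linarith

lemma lt_of_rnd_eq_gt (hrnd : IsRNE F even rnd) {q z v : ℝ} (hq : rnd q = z) (hv : v ∈ F)
    (hvz : v < z) : v < q := by
  by_contra h
  push_neg at h
  have h2 := (hrnd q).2.1 v hv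
  rw [hq, abs_of_nonpos (by linarith : q - z ≤ 0), abs_of_nonpos (by linarith : q - v ≤ 0)] at h2
  linarith

lemma gt_of_rnd_eq_lt (hrnd : IsRNE F even rnd) {q z c : ℝ} (hq : rnd q = z) (hc : c ∈ F)
    (hzc : z < c) : q < c := by
  by_contra h
  push_neg at h
  have h2 := (hrnd q).2.1 c hc
  rw [hq, abs_of_nonneg (by linarith : (0:ℝ) ≤ q - z), abs_of_nonneg (by linarith : (0:ℝ) ≤ q - c)] at h2
  linarith

end Rnd


section KeyLemma
variable {p : ℕ} {emin emax : ℤ}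

set_option maxHeartbeats 2000000 in
lemma deltaDiv_key (hp : 2 ≤ p) (hemin : emin ≤ 0) (hemax : 1 ≤ emax)
    {rnd : ℝ → ℝ} (hrnd : IsRNE (FF p emin emax) (evenFF p emin emax) rnd)
    {z : ℝ} (hz : z ∈ FF p emin emax) (h1 : 1 + (2:ℝ)^(1-(p:ℤ)) < |z|)
    (h2 : |z| ≤ fmax p emax) {y : ℝ} (hy : y ∈ FF p emin emax)
    {x : ℝ} (hx : x ∈ FF p emin emax) (hxy : rnd (x / y) = z) :
    y < deltaDiv p emin emax rnd z := by
  have hp1 : 1 ≤ p := by omega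
  have heps : (0:ℝ) < 2^(1-(p:ℤ)) := two_zpow_pos _
  have h1a : (1:ℝ) < |z| := by linarith
  have h1F : (1:ℝ) ∈ FF p emin emax := one_mem_FF hp1 hemin hemax
  have hoF : (1:ℝ) + 2^(1-(p:ℤ)) ∈ FF p emin emax := onePlusEps_mem_FF hp hemin hemax
  set S := {u | u ∈ FF p emin emax ∧ u < |z|} with hS
  have hSfin : S.Finite := FF_finite.subset (fun u hu => hu.1)
  have hSne : S.Nonempty := ⟨1, h1F, h1a⟩
  set v := sSup S with hvdef
  have hvS : v ∈ S := hSne.csSup_mem hSfin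
  have hvF : v ∈ FF p emin emax := hvS.1
  have hva : v < |z| := hvS.2
  have hv1 : 1 + 2^(1-(p:ℤ)) ≤ v := le_csSup hSfin.bddAbove ⟨hoF, h1⟩
  set T := {u | u ∈ FF p emin emax ∧ u < v} with hT
  have hTfin : T.Finite := FF_finite.subset (fun u hu => hu.1)
  have hTne : T.Nonempty := ⟨1, h1F, by linarith⟩
  set w := sSup T with hwdef
  have hwT : w ∈ T := hTne.csSup_mem hTfin
  have hwF := hwT.1
  have hwv : w < v := hwT.2
  have hw1 : (1:ℝ) ≤ w := le_csSup hTfin.bddAbove ⟨h1F, by linarith⟩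
  have hdelta : deltaDiv p emin emax rnd z = rnd (fmax p emax / w) := by
    rw [deltaDiv, if_pos ⟨h1, h2⟩]
    have hv' : predF (FF p emin emax) |z| = v := by rw [hvdef, hS]; rfl
    have hw' : predF (FF p emin emax) v = w := by rw [hwdef, hT]; rfl
    rw [hv', hw']
  rw [hdelta]
  have hfm : (0:ℝ) < fmax p emax := fmax_pos hp1
  have hv0 : (0:ℝ) < v := by linarith
  have hw0 : (0:ℝ) < w := by linarith
  have hvfm : v < fmax p emax := lt_of_lt_of_le hva h2
  have hA1 : 1 < fmax p emax / v := (one_lt_div hv0).mpr hvfm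
  have hL6 : w ≤ v * (1 - (2:ℝ)^(-(p:ℤ))) :=
    float_le_of_lt hp1 hemin hvF (by linarith) hwF hwv
  have hupos : (0:ℝ) < 2^(-(p:ℤ)) := two_zpow_pos _
  have key1 : fmax p emax * (2:ℝ)^(-(p:ℤ)) * w < fmax p emax * (v - w) := by
    nlinarith [mul_pos hfm hupos, hwv, hL6, hfm]
  have htA : fmax p emax / v * (2:ℝ)^(-(p:ℤ)) < fmax p emax / w - fmax p emax / v := by
    have e1 : fmax p emax / w - fmax p emax / v = fmax p emax * (v - w) / (v * w) := by
      field_simp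
    have e2 : fmax p emax / v * (2:ℝ)^(-(p:ℤ)) =
        fmax p emax * (2:ℝ)^(-(p:ℤ)) * w / (v * w) := by
      field_simp
    rw [e1, e2]
    exact (div_lt_div_iff_of_pos_right (mul_pos hv0 hw0)).mpr key1
  have hAu : 0 < fmax p emax / v * (2:ℝ)^(-(p:ℤ)) := mul_pos (div_pos hfm hv0) hupos
  by_cases hy0 : y ≤ 0
  · have hto : (1:ℝ) ≤ fmax p emax / w := by linarith
    have := rnd_ge hrnd h1F hto
    linarith
  push_neg at hy0
  have hz0 : z ≠ 0 := by
    intro h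
    rw [h, abs_zero] at h1a
    linarith
  have hyA : y < fmax p emax / v := by
    rcases lt_or_gt_of_ne hz0 with hzn | hzp
    · have haz : |z| = -z := abs_of_neg hzn
      have hnvF := neg_mem_FF hvF
      have hznv : z < -v := by rw [haz] at hva; linarith
      have hq : x / y < -v := gt_of_rnd_eq_lt hrnd hxy hnvF hznv
      have hx' : -x ≤ fmax p emax := le_fmax hp1 (neg_mem_FF hx)
      have hxlt : x < -v * y := (div_lt_iff₀ hy0).mp hq
      rw [lt_div_iff₀ hv0]
      nlinarith
    · have haz : |z| = z := abs_of_pos hzp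
      have hq : v < x / y := lt_of_rnd_eq_gt hrnd hxy hvF (by rw [haz] at hva; exact hva)
      have hx' : x ≤ fmax p emax := le_fmax hp1 hx
      have hxgt : v * y < x := (lt_div_iff₀ hy0).mp hq
      rw [lt_div_iff₀ hv0]
      nlinarith
  have hyfm : y < fmax p emax := by
    have : fmax p emax / v ≤ fmax p emax := div_le_self hfm.le (by linarith)
    linarith
  obtain ⟨s, hsF, hys, hsb⟩ := exists_succ hp1 hemin hemax hy hy0 hyfm
  by_cases hst : s ≤ fmax p emax / w
  · have := rnd_ge hrnd hsF hst
    linarith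
  · push_neg at hst
    apply rnd_gt hrnd hsF
    rw [abs_of_neg (by linarith : fmax p emax / w - s < 0)]
    have hb : (2:ℝ)^(1-(p:ℤ)) * max y ((2:ℝ)^emin) <
        2 * (fmax p emax / w - fmax p emax / v) := by
      have h2e : (2:ℝ)^(1-(p:ℤ)) = 2 * 2^(-(p:ℤ)) := by
        rw [show (1-(p:ℤ)) = -(p:ℤ)+1 by ring, zpow_add_one₀ two_ne_zero]
        ring
      rcases max_cases y ((2:ℝ)^emin) with ⟨hmx, _⟩ | ⟨hmx, _⟩
      · rw [hmx, h2e]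
        nlinarith [mul_pos hupos (sub_pos.mpr hyA), htA]
      · rw [hmx, h2e]
        have hem1 : (2:ℝ)^emin ≤ 1 := by simpa using two_zpow_mono hemin
        nlinarith [htA, mul_pos hupos (sub_pos.mpr hA1),
          mul_le_mul_of_nonneg_left hem1 hupos.le]
    linarith [hsb, hyA]

end KeyLemma

/-- `δ'_⊘(z)` is a correct upper bound for the second operand of division:
`x ⊘ y = z` implies `y ≤ δ'_⊘(z)`, and for `1 + 2^(1-p) < |z| ≤ f_max` every
feasible `y` is strictly below `δ'_⊘(z)`. -/
theorem deltaDiv_correct (p : ℕ) (hp : 2 ≤ p) (emin emax : ℤ)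
    (hemin : emin ≤ 0) (hemax : 1 ≤ emax)
    (rnd : ℝ → ℝ)
    (hrnd : IsRNE (FF p emin emax) (evenFF p emin emax) rnd) :
    (∀ z ∈ FF p emin emax, z ≠ 0 →
      ∀ x ∈ FF p emin emax, ∀ y ∈ FF p emin emax,
        rnd (x / y) = z → y ≤ deltaDiv p emin emax rnd z) ∧
    (∀ z ∈ FF p emin emax,
      1 + (2 : ℝ) ^ (1 - (p : ℤ)) < |z| → |z| ≤ fmax p emax →
      ∀ y ∈ FF p emin emax, (∃ x ∈ FF p emin emax, rnd (x / y) = z) →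
        y < deltaDiv p emin emax rnd z) := by
  have hp1 : 1 ≤ p := by omega
  constructor
  · intro z hz hz0 x hx y hy hxy
    by_cases hc : 1 + (2:ℝ)^(1-(p:ℤ)) < |z| ∧ |z| ≤ fmax p emax
    · exact (deltaDiv_key hp hemin hemax hrnd hz hc.1 hc.2 hy hx hxy).le
    · rw [deltaDiv, if_neg hc]
      exact le_fmax hp1 hy
  · rintro z hz ha hb y hy ⟨x, hx, hxy⟩
    exact deltaDiv_key hp hemin hemax hrnd hz ha hb hy hx hxy
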